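/- For α > 0 set K₁ = 4α, K₂ = 14α², k(x) = exp(−α(x² + x⁴)/58) − (α/6)(x² + x⁴), and define L₁(x) = x·k(x)³·exp(−K₁(x² + x⁴))/K₂ − (x³ + x⁴ + x⁵ + x⁷ + x⁹) for x ≥ 0. Then: (i) for every fixed α > 0, L₁(x) → −∞ as x → ∞; and (ii) for every positive integer n, L₁(nπ) → +∞ as α → 0⁺, so there exists α₀ > 0 such that for all α ∈ (0,α₀) one has L₁(nπ) > nπ; in particular for such α there is an interval of admissible initial-data norms d with nπ ≤ d < L₁(nπ). -/

import Mathlib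

noncomputable section
open Real Filter

/-- The metric lower-bound constant `k(x) = exp(−α(x²+x⁴)/58) − (α/6)(x²+x⁴)`. -/
def kconst (α x : ℝ) : ℝ :=
  Real.exp (-α * (x ^ 2 + x ^ 4) / 58) - (α / 6) * (x ^ 2 + x ^ 4)

/-- `L₁(x) = x k(x)³ exp(−K₁(x²+x⁴))/K₂ − (x³+x⁴+x⁵+x⁷+x⁹)` with `K₁ = 4α`,
`K₂ = 14α²`. -/
def L1 (α x : ℝ) : ℝ :=
  x * (kconst α x) ^ 3 * Real.exp (-(4 * α) * (x ^ 2 + x ^ 4)) / (14 * α ^ 2) -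
    (x ^ 3 + x ^ 4 + x ^ 5 + x ^ 7 + x ^ 9)

lemma poly_tendsto : Tendsto (fun x : ℝ => x ^ 3 + x ^ 4 + x ^ 5 + x ^ 7 + x ^ 9) atTop atTop := by
  have h3 := (tendsto_pow_atTop (by norm_num) : Tendsto (fun x : ℝ => x ^ 3) atTop atTop)
  have h4 := (tendsto_pow_atTop (by norm_num) : Tendsto (fun x : ℝ => x ^ 4) atTop atTop)
  have h5 := (tendsto_pow_atTop (by norm_num) : Tendsto (fun x : ℝ => x ^ 5) atTop atTop)
  have h7 := (tendsto_pow_atTop (by norm_num) : Tendsto (fun x : ℝ => x ^ 7) atTop atTop)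
  have h9 := (tendsto_pow_atTop (by norm_num) : Tendsto (fun x : ℝ => x ^ 9) atTop atTop)
  exact Tendsto.atTop_add_atTop (Tendsto.atTop_add_atTop (Tendsto.atTop_add_atTop (Tendsto.atTop_add_atTop h3 h4) h5) h7) h9

/-- **Properties of the ball-invariance function `L₁`.**
(i) For every fixed `α > 0`, `L₁(x) → −∞` as `x → ∞`; (ii) for every positive
integer `n`, `L₁(nπ) → +∞` as `α → 0⁺`, so there is `α₀ > 0` such that
`L₁(nπ) > nπ` for all `α ∈ (0,α₀)`; in particular, for such `α` there is an
admissible initial-data norm `d` with `nπ ≤ d < L₁(nπ)`. -/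
theorem L1_properties :
    (∀ α : ℝ, 0 < α → Tendsto (fun x => L1 α x) atTop atBot) ∧
    (∀ n : ℕ, 0 < n →
      Tendsto (fun α => L1 α ((n:ℝ) * π)) (nhdsWithin 0 (Set.Ioi 0)) atTop ∧
      ∃ α₀ : ℝ, 0 < α₀ ∧ ∀ α ∈ Set.Ioo (0:ℝ) α₀,
        (n:ℝ) * π < L1 α ((n:ℝ) * π) ∧
        ∃ d : ℝ, (n:ℝ) * π ≤ d ∧ d < L1 α ((n:ℝ) * π)) := by
  constructor
  · intro α hα
    -- eventually the first term is nonpositive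
    have hs : Tendsto (fun x : ℝ => α * (x ^ 2 + x ^ 4)) atTop atTop := by
      have h2 := (tendsto_pow_atTop (by norm_num) : Tendsto (fun x : ℝ => x ^ 2) atTop atTop)
      have h4 := (tendsto_pow_atTop (by norm_num) : Tendsto (fun x : ℝ => x ^ 4) atTop atTop)
      exact (Tendsto.atTop_add_atTop h2 h4).const_mul_atTop hα
    have hev : ∀ᶠ x : ℝ in atTop, L1 α x ≤ -(x ^ 3 + x ^ 4 + x ^ 5 + x ^ 7 + x ^ 9) := by
      filter_upwards [hs.eventually_ge_atTop 6, eventually_ge_atTop (0:ℝ)] with x h6 hx0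
      have hsnn : (0:ℝ) ≤ x ^ 2 + x ^ 4 := by positivity
      have hk : kconst α x ≤ 0 := by
        have h1 : Real.exp (-α * (x ^ 2 + x ^ 4) / 58) ≤ 1 := by
          apply Real.exp_le_one_iff.mpr
          have : 0 ≤ α * (x ^ 2 + x ^ 4) := mul_nonneg hα.le hsnn
          nlinarith
        have h2 : (1:ℝ) ≤ (α / 6) * (x ^ 2 + x ^ 4) := by nlinarith
        simp only [kconst]; linarith
      have hk3 : (kconst α x) ^ 3 ≤ 0 := Odd.pow_nonpos (by decide) hk
      have hnum : x * (kconst α x) ^ 3 * Real.exp (-(4 * α) * (x ^ 2 + x ^ 4)) ≤ 0 :=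
        mul_nonpos_of_nonpos_of_nonneg (mul_nonpos_of_nonneg_of_nonpos hx0 hk3)
          (Real.exp_pos _).le
      have hfrac : x * (kconst α x) ^ 3 * Real.exp (-(4 * α) * (x ^ 2 + x ^ 4)) / (14 * α ^ 2)
          ≤ 0 := div_nonpos_of_nonpos_of_nonneg hnum (by positivity)
      simp only [L1]; linarith
    exact tendsto_atBot_mono' _ hev (tendsto_neg_atBot_iff.mpr poly_tendsto)
  · intro n hn
    set y : ℝ := (n : ℝ) * π with hy
    have hy0 : 0 < y := by
      have : (1:ℝ) ≤ (n:ℝ) := by exact_mod_cast hn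
      nlinarith [Real.pi_pos]
    set s : ℝ := y ^ 2 + y ^ 4 with hsdef
    -- the numerator tends to y
    have hnum : Tendsto (fun α : ℝ => y * (kconst α y) ^ 3 *
        Real.exp (-(4 * α) * s)) (nhdsWithin 0 (Set.Ioi 0)) (nhds y) := by
      have hc : Continuous (fun α : ℝ => y * (kconst α y) ^ 3 * Real.exp (-(4 * α) * s)) := by
        unfold kconst; continuity
      have := hc.tendsto 0
      have hval : y * (kconst 0 y) ^ 3 * Real.exp (-(4 * 0) * s) = y := by
        simp [kconst]
      rw [hval] at this
      exact this.mono_left nhdsWithin_le_nhds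
    -- the reciprocal of the denominator tends to atTop
    have hden : Tendsto (fun α : ℝ => (14 * α ^ 2)⁻¹) (nhdsWithin 0 (Set.Ioi 0)) atTop := by
      apply Tendsto.inv_tendsto_nhdsGT_zero
      rw [tendsto_nhdsWithin_iff]
      constructor
      · have hc : Continuous (fun α : ℝ => 14 * α ^ 2) := by continuity
        have := hc.tendsto 0
        simpa using this.mono_left nhdsWithin_le_nhds
      · filter_upwards [self_mem_nhdsWithin] with α hα
        have : (0:ℝ) < α := hα
        exact Set.mem_Ioi.mpr (by positivity)
    have hdiv : Tendsto (fun α : ℝ => y * (kconst α y) ^ 3 *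
        Real.exp (-(4 * α) * s) / (14 * α ^ 2)) (nhdsWithin 0 (Set.Ioi 0)) atTop := by
      simp only [div_eq_mul_inv]
      exact hnum.pos_mul_atTop hy0 hden
    have hmain : Tendsto (fun α => L1 α y) (nhdsWithin 0 (Set.Ioi 0)) atTop := by
      have := tendsto_atTop_add_const_right (nhdsWithin (0:ℝ) (Set.Ioi 0))
        (-(y ^ 3 + y ^ 4 + y ^ 5 + y ^ 7 + y ^ 9)) hdiv
      simp only [L1, sub_eq_add_neg]
      exact this
    refine ⟨hmain, ?_⟩
    have hev : ∀ᶠ α in nhdsWithin (0:ℝ) (Set.Ioi 0), y < L1 α y :=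
      hmain.eventually (eventually_gt_atTop y)
    rw [eventually_nhdsWithin_iff, Metric.eventually_nhds_iff] at hev
    obtain ⟨ε, hε, hP⟩ := hev
    refine ⟨ε, hε, fun α hα => ?_⟩
    obtain ⟨hα0, hαε⟩ := hα
    have hlt : y < L1 α y := by
      apply hP (by rw [Real.dist_eq]; rw [sub_zero]; rwa [abs_of_pos hα0]) hα0
    exact ⟨hlt, y, le_refl y, hlt⟩

end
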